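/- For every real x > 0, every h ∈ ℂ with Re(h) > 1, and every s ∈ ℂ with Re(s) > 1, the following integral representation holds: (1/Γ(s)) · ∫_0^∞ t^{s−2} · F_q(−t, x | h) dt = ζ_q(s, x | h), where F_q(−t, x | h) = t · Σ_{n=0}^{∞} q^{hn+x}·exp(−[x+n]_q·t) + (h−1)(1−q) · Σ_{n=0}^{∞} q^{(h−1)n}·exp(−[x+n]_q·t), the integral is over real t > 0 with t^{s−2} = exp((s−2)·Real.log t), and both the integral and all series converge absolutely. -/

import Mathlib

open Complex Finset Filter

/-- Complex power `q^z := exp(z·log q)` for a real base `q`. -/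
noncomputable def qcpow (q : ℝ) (z : ℂ) : ℂ := Complex.exp (z * (Real.log q : ℂ))

/-- The complex `q`-number `[z]_q = (1 - q^z)/(1 - q)`. -/
noncomputable def qnum (q : ℝ) (z : ℂ) : ℂ := (1 - qcpow q z) / (1 - (q : ℂ))

/-- The real `q`-number `[y]_q = (1 - q^y)/(1 - q)` for real `y`. -/
noncomputable def qnumR (q : ℝ) (y : ℝ) : ℝ := (1 - Real.exp (y * Real.log q)) / (1 - q)

/-- The `(h,q)`-Bernoulli polynomial
`β_{n,q}^h(x) = (1-q)^{-n} ∑_{l=0}^{n} C(n,l) (-1)^l q^{lx} (l+h-1)/[l+h-1]_q`. -/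
noncomputable def qbeta (q : ℝ) (h : ℂ) (n : ℕ) (x : ℝ) : ℂ :=
  (1 - (q : ℂ))⁻¹ ^ n * ∑ l ∈ Finset.range (n + 1),
    (n.choose l : ℂ) * (-1) ^ l * qcpow q ((l : ℂ) * (x : ℂ)) *
      (((l : ℂ) + h - 1) / qnum q ((l : ℂ) + h - 1))

/-- The Hurwitz-type `(h,q)`-zeta function
`ζ_q(s, x | h) = ∑ q^{hn+x}/[n+x]_q^s + ((h-1)(1-q)/(s-1)) ∑ q^{(h-1)n}/[n+x]_q^{s-1}`,
where `[n+x]_q^s = exp(s·log [n+x]_q)`. -/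
noncomputable def hqZetaH (q : ℝ) (h s : ℂ) (x : ℝ) : ℂ :=
  (∑' n : ℕ, qcpow q (h * (n : ℂ) + (x : ℂ)) /
      Complex.exp (s * (Real.log (qnumR q ((n : ℝ) + x)) : ℂ))) +
  ((h - 1) * (1 - (q : ℂ)) / (s - 1)) *
    ∑' n : ℕ, qcpow q ((h - 1) * (n : ℂ)) /
      Complex.exp ((s - 1) * (Real.log (qnumR q ((n : ℝ) + x)) : ℂ))

/-- The `(h,q)`-zeta function
`ζ_q(s | h) = ∑_{n≥1} q^{hn}/[n]_q^s + ((h-1)(1-q)/(s-1)) ∑_{n≥1} q^{(h-1)n}/[n]_q^{s-1}`. -/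
noncomputable def hqZeta (q : ℝ) (h s : ℂ) : ℂ :=
  (∑' n : ℕ, qcpow q (h * ((n : ℂ) + 1)) /
      Complex.exp (s * (Real.log (qnumR q ((n : ℝ) + 1)) : ℂ))) +
  ((h - 1) * (1 - (q : ℂ)) / (s - 1)) *
    ∑' n : ℕ, qcpow q ((h - 1) * ((n : ℂ) + 1)) /
      Complex.exp ((s - 1) * (Real.log (qnumR q ((n : ℝ) + 1)) : ℂ))

/-- `F_q(-t, x | h) = t ∑ q^{hn+x} e^{-[x+n]_q t} + (h-1)(1-q) ∑ q^{(h-1)n} e^{-[x+n]_q t}`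
for real `t`. -/
noncomputable def FqNeg (q : ℝ) (h : ℂ) (x t : ℝ) : ℂ :=
  (t : ℂ) * (∑' n : ℕ, qcpow q (h * (n : ℂ) + (x : ℂ)) *
      Complex.exp (-((qnumR q (x + n) : ℂ)) * (t : ℂ))) +
  (h - 1) * (1 - (q : ℂ)) *
    ∑' n : ℕ, qcpow q ((h - 1) * (n : ℂ)) *
      Complex.exp (-((qnumR q (x + n) : ℂ)) * (t : ℂ))

section HqAux

open MeasureTheory Set

lemma hq_qnumR_pos {q : ℝ} (hq0 : 0 < q) (hq1 : q < 1) {y : ℝ} (hy : 0 < y) : 0 < qnumR q y := by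
  have hlq : Real.log q < 0 := Real.log_neg hq0 hq1
  have h1 : Real.exp (y * Real.log q) < 1 := by
    rw [Real.exp_lt_one_iff]; nlinarith
  exact div_pos (by linarith) (by linarith)

lemma hq_qnumR_le {q : ℝ} (hq0 : 0 < q) (hq1 : q < 1) {y z : ℝ} (hyz : y ≤ z) :
    qnumR q y ≤ qnumR q z := by
  have hlq : Real.log q < 0 := Real.log_neg hq0 hq1
  have he : Real.exp (z * Real.log q) ≤ Real.exp (y * Real.log q) :=
    Real.exp_le_exp.2 (by nlinarith)
  unfold qnumR
  gcongr

lemma hq_qnumR_lt {q : ℝ} (hq1 : q < 1) (y : ℝ) : qnumR q y ≤ (1 - q)⁻¹ := by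
  unfold qnumR
  rw [div_le_iff₀ (by linarith)]
  have := Real.exp_pos (y * Real.log q)
  rw [inv_mul_cancel₀ (by linarith : (1:ℝ) - q ≠ 0)]
  linarith

lemma hq_norm_qcpow (q : ℝ) (z : ℂ) : ‖qcpow q z‖ = Real.exp (z.re * Real.log q) := by
  simp [qcpow, Complex.norm_exp]

lemma hq_norm_E {a t : ℝ} : ‖Complex.exp (-((a : ℝ) : ℂ) * (t : ℂ))‖ = Real.exp (-a * t) := by
  have : (-((a : ℝ) : ℂ) * (t : ℂ)) = ((-a * t : ℝ) : ℂ) := by push_cast; ring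
  rw [this, Complex.norm_exp, Complex.ofReal_re]

lemma hq_integrableOn_rpow_exp {b r : ℝ} (hb : -1 < b) (hr : 0 < r) :
    IntegrableOn (fun t : ℝ => t ^ b * Real.exp (-r * t)) (Ioi 0) := by
  have := integrableOn_rpow_mul_exp_neg_mul_rpow hb (one_pos) hr
  simpa [Real.rpow_one] using this

lemma hq_meas_aux (a : ℂ) (r : ℝ) :
    Measurable (fun t : ℝ => Complex.exp ((a - 1) * (Real.log t : ℂ)) *
      Complex.exp (-(r : ℂ) * t)) := by
  apply Measurable.mul
  · exact Complex.measurable_exp.comp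
      ((Complex.measurable_ofReal.comp Real.measurable_log).const_mul (a - 1))
  · exact Complex.measurable_exp.comp (Complex.measurable_ofReal.const_mul (-(r : ℂ)))

lemma hq_norm_aux (a : ℂ) (r : ℝ) {t : ℝ} (ht : 0 < t) :
    ‖Complex.exp ((a - 1) * (Real.log t : ℂ)) * Complex.exp (-(r : ℂ) * t)‖
      = t ^ (a.re - 1) * Real.exp (-r * t) := by
  rw [norm_mul, Complex.norm_exp, Complex.norm_exp]
  have h1 : ((a - 1) * (Real.log t : ℂ)).re = (a.re - 1) * Real.log t := by
    simp [Complex.mul_re]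
  have h2 : ((-(r : ℂ)) * (t : ℂ)).re = -r * t := by simp
  rw [h1, h2, Real.rpow_def_of_pos ht]
  ring_nf

lemma hq_integrableOn_aux (a : ℂ) (ha : 0 < a.re) (r : ℝ) (hr : 0 < r) :
    IntegrableOn (fun t : ℝ => Complex.exp ((a - 1) * (Real.log t : ℂ)) *
      Complex.exp (-(r : ℂ) * t)) (Ioi 0) := by
  have hb : IntegrableOn (fun t : ℝ => t ^ (a.re - 1) * Real.exp (-r * t)) (Ioi 0) :=
    hq_integrableOn_rpow_exp (by linarith) hr
  refine Integrable.mono' hb ((hq_meas_aux a r).aestronglyMeasurable) ?_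
  filter_upwards [self_mem_ae_restrict measurableSet_Ioi] with t ht
  rw [hq_norm_aux a r ht]

lemma hq_integral_aux (a : ℂ) (ha : 0 < a.re) (r : ℝ) (hr : 0 < r) :
    ∫ t in Ioi (0:ℝ), Complex.exp ((a - 1) * (Real.log t : ℂ)) * Complex.exp (-(r : ℂ) * t)
      = (1 / (r : ℂ)) ^ a * Complex.Gamma a := by
  rw [← integral_cpow_mul_exp_neg_mul_Ioi ha hr]
  refine setIntegral_congr_fun measurableSet_Ioi (fun t ht => ?_)
  rw [Set.mem_Ioi] at ht
  rw [Complex.cpow_def_of_ne_zero (Complex.ofReal_ne_zero.2 ht.ne'),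
    ← Complex.ofReal_log ht.le, mul_comm ((Real.log t : ℂ))]
  ring_nf

lemma hq_cpow_inv (r : ℝ) (hr : 0 < r) (a : ℂ) :
    (1 / (r : ℂ)) ^ a = (Complex.exp (a * (Real.log r : ℂ)))⁻¹ := by
  rw [show (1 / (r : ℂ)) = ((r⁻¹ : ℝ) : ℂ) by push_cast; ring]
  rw [Complex.cpow_def_of_ne_zero (by exact_mod_cast inv_ne_zero hr.ne'),
    ← Complex.ofReal_log (by positivity), Real.log_inv, ← Complex.exp_neg]
  congr 1
  push_cast
  ring

lemma hq_measurable_tsum {f : ℕ → ℝ → ℂ} (hf : ∀ n, Measurable (f n))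
    (hsum : ∀ t, Summable (fun n => f n t)) :
    Measurable (fun t => ∑' n, f n t) := by
  apply measurable_of_tendsto_metrizable' atTop
    (f := fun k => fun t => ∑ n ∈ Finset.range k, f n t)
    (fun k => Finset.measurable_sum _ (fun n _ => hf n))
  rw [tendsto_pi_nhds]
  intro t
  exact (hsum t).hasSum.tendsto_sum_nat

end HqAux

open MeasureTheory Set

/-- integral representation
`(1/Γ(s)) ∫_0^∞ t^{s-2} F_q(-t, x | h) dt = ζ_q(s, x | h)` for `Re(s) > 1`,
with all series and the integral converging absolutely. -/
theorem hqZetaH_integral_representation (q : ℝ) (hq0 : 0 < q) (hq1 : q < 1)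
    (h : ℂ) (hh : 1 < h.re) (x : ℝ) (hx : 0 < x) (s : ℂ) (hs : 1 < s.re) :
    (∀ t : ℝ, 0 < t →
      Summable (fun n : ℕ => qcpow q (h * (n : ℂ) + (x : ℂ)) *
        Complex.exp (-((qnumR q (x + n) : ℂ)) * (t : ℂ))) ∧
      Summable (fun n : ℕ => qcpow q ((h - 1) * (n : ℂ)) *
        Complex.exp (-((qnumR q (x + n) : ℂ)) * (t : ℂ)))) ∧
    MeasureTheory.IntegrableOn
      (fun t : ℝ => Complex.exp ((s - 2) * (Real.log t : ℂ)) * FqNeg q h x t)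
      (Set.Ioi 0) ∧
    Summable (fun n : ℕ => qcpow q (h * (n : ℂ) + (x : ℂ)) /
      Complex.exp (s * (Real.log (qnumR q ((n : ℝ) + x)) : ℂ))) ∧
    Summable (fun n : ℕ => qcpow q ((h - 1) * (n : ℂ)) /
      Complex.exp ((s - 1) * (Real.log (qnumR q ((n : ℝ) + x)) : ℂ))) ∧
    (1 / Complex.Gamma s) *
        ∫ t in Set.Ioi (0 : ℝ), Complex.exp ((s - 2) * (Real.log t : ℂ)) * FqNeg q h x t =
      hqZetaH q h s x := by
  have hlq : Real.log q < 0 := Real.log_neg hq0 hq1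
  set r1 : ℝ := Real.exp (h.re * Real.log q) with hr1def
  set r2 : ℝ := Real.exp ((h.re - 1) * Real.log q) with hr2def
  set qx : ℝ := Real.exp (x * Real.log q) with hqxdef
  have hr1pos : 0 < r1 := Real.exp_pos _
  have hr2pos : 0 < r2 := Real.exp_pos _
  have hqxpos : 0 < qx := Real.exp_pos _
  have hr1lt : r1 < 1 := by rw [hr1def, Real.exp_lt_one_iff]; nlinarith
  have hr2lt : r2 < 1 := by rw [hr2def, Real.exp_lt_one_iff]; nlinarith
  set L : ℕ → ℝ := fun n => qnumR q (x + n) with hLdef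
  set L0 : ℝ := qnumR q x with hL0def
  have hL0pos : 0 < L0 := hq_qnumR_pos hq0 hq1 hx
  have hLpos : ∀ n : ℕ, 0 < L n := fun n => hq_qnumR_pos hq0 hq1 (by positivity)
  have hLge : ∀ n : ℕ, L0 ≤ L n := fun n =>
    hq_qnumR_le hq0 hq1 (le_add_of_nonneg_right (Nat.cast_nonneg n))
  have hLub : ∀ n : ℕ, L n ≤ (1 - q)⁻¹ := fun n => hq_qnumR_lt hq1 _
  -- norms of the coefficients
  have hc1 : ∀ n : ℕ, ‖qcpow q (h * (n : ℂ) + (x : ℂ))‖ = qx * r1 ^ n := by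
    intro n
    rw [hq_norm_qcpow]
    have hre : (h * (n : ℂ) + (x : ℂ)).re = h.re * n + x := by simp [Complex.mul_re]
    rw [hre, show (h.re * n + x) * Real.log q
        = x * Real.log q + n * (h.re * Real.log q) by ring, Real.exp_add, Real.exp_nat_mul]
  have hc2 : ∀ n : ℕ, ‖qcpow q ((h - 1) * (n : ℂ))‖ = r2 ^ n := by
    intro n
    rw [hq_norm_qcpow]
    have hre : ((h - 1) * (n : ℂ)).re = (h.re - 1) * n := by simp [Complex.mul_re]
    rw [hre, show (h.re - 1) * n * Real.log q = n * ((h.re - 1) * Real.log q) by ring,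
      Real.exp_nat_mul]
  have hgeo1 : Summable (fun n : ℕ => qx * r1 ^ n) :=
    (summable_geometric_of_lt_one hr1pos.le hr1lt).mul_left _
  have hgeo2 : Summable (fun n : ℕ => r2 ^ n) :=
    summable_geometric_of_lt_one hr2pos.le hr2lt
  -- part 1 : pointwise summability (for all real t, using boundedness of L)
  have hsumnorm1 : ∀ t : ℝ, Summable (fun n : ℕ =>
      ‖qcpow q (h * (n : ℂ) + (x : ℂ)) * Complex.exp (-((L n : ℝ) : ℂ) * (t : ℂ))‖) := by
    intro t
    refine Summable.of_nonneg_of_le (fun n => norm_nonneg _) (fun n => ?_)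
      (hgeo1.mul_right (Real.exp ((1 - q)⁻¹ * |t|)))
    rw [norm_mul, hc1 n, hq_norm_E]
    have hb : Real.exp (-(L n) * t) ≤ Real.exp ((1 - q)⁻¹ * |t|) := by
      apply Real.exp_le_exp.2
      have h1 : -(L n) * t ≤ L n * |t| := by nlinarith [abs_nonneg t, neg_abs_le t, (hLpos n).le]
      have h2 : L n * |t| ≤ (1 - q)⁻¹ * |t| := by nlinarith [abs_nonneg t, hLub n]
      linarith
    have := mul_le_mul_of_nonneg_left hb (by positivity : (0:ℝ) ≤ qx * r1 ^ n)
    linarith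
  have hsumnorm2 : ∀ t : ℝ, Summable (fun n : ℕ =>
      ‖qcpow q ((h - 1) * (n : ℂ)) * Complex.exp (-((L n : ℝ) : ℂ) * (t : ℂ))‖) := by
    intro t
    refine Summable.of_nonneg_of_le (fun n => norm_nonneg _) (fun n => ?_)
      (hgeo2.mul_right (Real.exp ((1 - q)⁻¹ * |t|)))
    rw [norm_mul, hc2 n, hq_norm_E]
    have hb : Real.exp (-(L n) * t) ≤ Real.exp ((1 - q)⁻¹ * |t|) := by
      apply Real.exp_le_exp.2
      have h1 : -(L n) * t ≤ L n * |t| := by nlinarith [abs_nonneg t, neg_abs_le t, (hLpos n).le]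
      have h2 : L n * |t| ≤ (1 - q)⁻¹ * |t| := by nlinarith [abs_nonneg t, hLub n]
      linarith
    have := mul_le_mul_of_nonneg_left hb (by positivity : (0:ℝ) ≤ r2 ^ n)
    linarith
  have hpart1 : ∀ t : ℝ, 0 < t →
      Summable (fun n : ℕ => qcpow q (h * (n : ℂ) + (x : ℂ)) *
        Complex.exp (-((qnumR q (x + n) : ℂ)) * (t : ℂ))) ∧
      Summable (fun n : ℕ => qcpow q ((h - 1) * (n : ℂ)) *
        Complex.exp (-((qnumR q (x + n) : ℂ)) * (t : ℂ))) := by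
    intro t _
    exact ⟨(hsumnorm1 t).of_norm, (hsumnorm2 t).of_norm⟩
  -- exponents
  have hs0 : 0 < s.re := by linarith
  have hs1re : 0 < (s - 1).re := by
    rw [Complex.sub_re, Complex.one_re]; linarith
  -- the two families of functions
  set f1 : ℕ → ℝ → ℂ := fun n t => qcpow q (h * (n : ℂ) + (x : ℂ)) *
    (Complex.exp ((s - 1) * (Real.log t : ℂ)) * Complex.exp (-((L n : ℝ) : ℂ) * t)) with hf1def
  set f2 : ℕ → ℝ → ℂ := fun n t => qcpow q ((h - 1) * (n : ℂ)) *
    (Complex.exp ((s - 2) * (Real.log t : ℂ)) * Complex.exp (-((L n : ℝ) : ℂ) * t)) with hf2def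
  have hint1 : ∀ n, IntegrableOn (f1 n) (Ioi 0) := fun n =>
    (hq_integrableOn_aux s hs0 (L n) (hLpos n)).const_mul _
  have hint2 : ∀ n, IntegrableOn (f2 n) (Ioi 0) := by
    intro n
    have h2 := (hq_integrableOn_aux (s - 1) hs1re (L n) (hLpos n)).const_mul
      (qcpow q ((h - 1) * (n : ℂ)))
    rw [show s - 1 - 1 = s - 2 by ring] at h2
    exact h2
  have hnorm1 : ∀ (n : ℕ) (t : ℝ), 0 < t →
      ‖f1 n t‖ = (qx * r1 ^ n) * (t ^ (s.re - 1) * Real.exp (-(L n) * t)) := by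
    intro n t ht
    rw [hf1def]
    simp only
    rw [norm_mul, hc1 n, hq_norm_aux s (L n) ht]
  have hnorm2 : ∀ (n : ℕ) (t : ℝ), 0 < t →
      ‖f2 n t‖ = r2 ^ n * (t ^ (s.re - 2) * Real.exp (-(L n) * t)) := by
    intro n t ht
    rw [hf2def]
    simp only
    rw [norm_mul, hc2 n, show s - 2 = (s - 1) - 1 by ring, hq_norm_aux (s - 1) (L n) ht]
    rw [show (s - 1).re - 1 = s.re - 2 by rw [Complex.sub_re, Complex.one_re]; ring]
  set D1 : ℝ → ℝ := fun t => t ^ (s.re - 1) * Real.exp (-L0 * t) with hD1def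
  set D2 : ℝ → ℝ := fun t => t ^ (s.re - 2) * Real.exp (-L0 * t) with hD2def
  have hD1 : IntegrableOn D1 (Ioi 0) := hq_integrableOn_rpow_exp (by linarith) hL0pos
  have hD2 : IntegrableOn D2 (Ioi 0) := hq_integrableOn_rpow_exp (by linarith) hL0pos
  have hble1 : ∀ n, ∀ t ∈ Ioi (0:ℝ), ‖f1 n t‖ ≤ (qx * r1 ^ n) * D1 t := by
    intro n t ht
    rw [Set.mem_Ioi] at ht
    rw [hnorm1 n t ht, hD1def]
    have hee : Real.exp (-(L n) * t) ≤ Real.exp (-L0 * t) :=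
      Real.exp_le_exp.2 (by nlinarith [hLge n])
    have h0 : (0:ℝ) ≤ t ^ (s.re - 1) := Real.rpow_nonneg ht.le _
    have : t ^ (s.re - 1) * Real.exp (-(L n) * t) ≤ t ^ (s.re - 1) * Real.exp (-L0 * t) :=
      mul_le_mul_of_nonneg_left hee h0
    have hcoef : (0:ℝ) ≤ qx * r1 ^ n := by positivity
    exact mul_le_mul_of_nonneg_left this hcoef
  have hble2 : ∀ n, ∀ t ∈ Ioi (0:ℝ), ‖f2 n t‖ ≤ r2 ^ n * D2 t := by
    intro n t ht
    rw [Set.mem_Ioi] at ht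
    rw [hnorm2 n t ht, hD2def]
    have hee : Real.exp (-(L n) * t) ≤ Real.exp (-L0 * t) :=
      Real.exp_le_exp.2 (by nlinarith [hLge n])
    have h0 : (0:ℝ) ≤ t ^ (s.re - 2) := Real.rpow_nonneg ht.le _
    have : t ^ (s.re - 2) * Real.exp (-(L n) * t) ≤ t ^ (s.re - 2) * Real.exp (-L0 * t) :=
      mul_le_mul_of_nonneg_left hee h0
    exact mul_le_mul_of_nonneg_left this (by positivity)
  have hIbound1 : ∀ n, ∫ t in Ioi (0:ℝ), ‖f1 n t‖ ≤ (qx * r1 ^ n) * ∫ t in Ioi (0:ℝ), D1 t := by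
    intro n
    rw [← integral_const_mul]
    exact setIntegral_mono_on (hint1 n).norm (hD1.const_mul _) measurableSet_Ioi (hble1 n)
  have hIbound2 : ∀ n, ∫ t in Ioi (0:ℝ), ‖f2 n t‖ ≤ r2 ^ n * ∫ t in Ioi (0:ℝ), D2 t := by
    intro n
    rw [← integral_const_mul]
    exact setIntegral_mono_on (hint2 n).norm (hD2.const_mul _) measurableSet_Ioi (hble2 n)
  have hsumInt1 : Summable (fun n => ∫ t in Ioi (0:ℝ), ‖f1 n t‖) :=
    Summable.of_nonneg_of_le (fun n => integral_nonneg fun t => norm_nonneg _)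
      hIbound1 (hgeo1.mul_right _)
  have hsumInt2 : Summable (fun n => ∫ t in Ioi (0:ℝ), ‖f2 n t‖) :=
    Summable.of_nonneg_of_le (fun n => integral_nonneg fun t => norm_nonneg _)
      hIbound2 (hgeo2.mul_right _)
  have hkey1 : ∑' n, ∫ t in Ioi (0:ℝ), f1 n t = ∫ t in Ioi (0:ℝ), ∑' n, f1 n t :=
    integral_tsum_of_summable_integral_norm hint1 hsumInt1
  have hkey2 : ∑' n, ∫ t in Ioi (0:ℝ), f2 n t = ∫ t in Ioi (0:ℝ), ∑' n, f2 n t :=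
    integral_tsum_of_summable_integral_norm hint2 hsumInt2
  -- measurability and integrability of the tsums
  have hmeas1 : ∀ n, Measurable (f1 n) := fun n => (hq_meas_aux s (L n)).const_mul _
  have hmeas2 : ∀ n, Measurable (f2 n) := by
    intro n
    have h2 := (hq_meas_aux (s - 1) (L n)).const_mul (qcpow q ((h - 1) * (n : ℂ)))
    rw [show s - 1 - 1 = s - 2 by ring] at h2
    exact h2
  have hsumf1 : ∀ t : ℝ, Summable (fun n => f1 n t) := by
    intro t
    refine (((hsumnorm1 t).of_norm.mul_left
      (Complex.exp ((s - 1) * (Real.log t : ℂ)))).congr (fun n => ?_))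
    rw [hf1def]; simp only; ring
  have hsumf2 : ∀ t : ℝ, Summable (fun n => f2 n t) := by
    intro t
    refine (((hsumnorm2 t).of_norm.mul_left
      (Complex.exp ((s - 2) * (Real.log t : ℂ)))).congr (fun n => ?_))
    rw [hf2def]; simp only; ring
  have hfn1 : ∀ t ∈ Ioi (0:ℝ), Summable (fun n => ‖f1 n t‖) := by
    intro t ht
    exact Summable.of_nonneg_of_le (fun n => norm_nonneg _) (fun n => hble1 n t ht)
      (hgeo1.mul_right _)
  have hfn2 : ∀ t ∈ Ioi (0:ℝ), Summable (fun n => ‖f2 n t‖) := by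
    intro t ht
    exact Summable.of_nonneg_of_le (fun n => norm_nonneg _) (fun n => hble2 n t ht)
      (hgeo2.mul_right _)
  have htb1 : ∀ t ∈ Ioi (0:ℝ), ‖∑' n, f1 n t‖ ≤ (qx * (1 - r1)⁻¹) * D1 t := by
    intro t ht
    calc ‖∑' n, f1 n t‖ ≤ ∑' n, ‖f1 n t‖ := norm_tsum_le_tsum_norm (hfn1 t ht)
      _ ≤ ∑' n, (qx * r1 ^ n) * D1 t :=
        Summable.tsum_le_tsum (fun n => hble1 n t ht) (hfn1 t ht) (hgeo1.mul_right _)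
      _ = ∑' n : ℕ, (qx * D1 t) * r1 ^ n := tsum_congr fun n => by ring
      _ = (qx * D1 t) * ∑' n : ℕ, r1 ^ n := tsum_mul_left
      _ = (qx * (1 - r1)⁻¹) * D1 t := by
        rw [tsum_geometric_of_lt_one hr1pos.le hr1lt]; ring
  have htb2 : ∀ t ∈ Ioi (0:ℝ), ‖∑' n, f2 n t‖ ≤ (1 - r2)⁻¹ * D2 t := by
    intro t ht
    calc ‖∑' n, f2 n t‖ ≤ ∑' n, ‖f2 n t‖ := norm_tsum_le_tsum_norm (hfn2 t ht)
      _ ≤ ∑' n, r2 ^ n * D2 t :=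
        Summable.tsum_le_tsum (fun n => hble2 n t ht) (hfn2 t ht) (hgeo2.mul_right _)
      _ = ∑' n : ℕ, D2 t * r2 ^ n := tsum_congr fun n => by ring
      _ = D2 t * ∑' n : ℕ, r2 ^ n := tsum_mul_left
      _ = (1 - r2)⁻¹ * D2 t := by
        rw [tsum_geometric_of_lt_one hr2pos.le hr2lt]; ring
  have hS1int : IntegrableOn (fun t => ∑' n, f1 n t) (Ioi 0) := by
    refine Integrable.mono' (hD1.const_mul (qx * (1 - r1)⁻¹))
      ((hq_measurable_tsum hmeas1 hsumf1).aestronglyMeasurable) ?_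
    filter_upwards [self_mem_ae_restrict measurableSet_Ioi] with t ht
    exact htb1 t ht
  have hS2int : IntegrableOn (fun t => ∑' n, f2 n t) (Ioi 0) := by
    refine Integrable.mono' (hD2.const_mul ((1 - r2)⁻¹))
      ((hq_measurable_tsum hmeas2 hsumf2).aestronglyMeasurable) ?_
    filter_upwards [self_mem_ae_restrict measurableSet_Ioi] with t ht
    exact htb2 t ht
  -- the integrand agrees with the sum of the two tsums on Ioi 0
  have heq : ∀ t ∈ Ioi (0:ℝ),
      Complex.exp ((s - 2) * (Real.log t : ℂ)) * FqNeg q h x t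
        = (∑' n, f1 n t) + (h - 1) * (1 - (q : ℂ)) * ∑' n, f2 n t := by
    intro t ht
    rw [Set.mem_Ioi] at ht
    rw [FqNeg, mul_add]
    congr 1
    · have ht' : (t : ℂ) = Complex.exp ((Real.log t : ℂ)) := by
        rw [← Complex.ofReal_exp, Real.exp_log ht]
      rw [show (∑' n, f1 n t)
          = Complex.exp ((s - 1) * (Real.log t : ℂ)) * ∑' (n : ℕ),
            qcpow q (h * (n : ℂ) + (x : ℂ)) *
              Complex.exp (-((qnumR q (x + n) : ℂ)) * (t : ℂ)) from by
        rw [← tsum_mul_left]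
        exact tsum_congr fun n => by rw [hf1def]; simp only; ring]
      rw [ht', ← mul_assoc, ← Complex.exp_add]
      congr 2
      ring
    · rw [show (∑' n, f2 n t)
          = Complex.exp ((s - 2) * (Real.log t : ℂ)) * ∑' (n : ℕ),
            qcpow q ((h - 1) * (n : ℂ)) *
              Complex.exp (-((qnumR q (x + n) : ℂ)) * (t : ℂ)) from by
        rw [← tsum_mul_left]
        exact tsum_congr fun n => by rw [hf2def]; simp only; ring]
      ring
  have hTint : IntegrableOn
      (fun t : ℝ => Complex.exp ((s - 2) * (Real.log t : ℂ)) * FqNeg q h x t) (Ioi 0) := by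
    refine IntegrableOn.congr_fun (hS1int.add (hS2int.const_mul ((h - 1) * (1 - (q : ℂ)))))
      (fun t ht => (heq t ht).symm) measurableSet_Ioi
  -- summability of the zeta series
  have hnormdiv1 : ∀ n : ℕ, ‖qcpow q (h * (n : ℂ) + (x : ℂ)) /
      Complex.exp (s * (Real.log (qnumR q ((n : ℝ) + x)) : ℂ))‖
        = (qx * r1 ^ n) / (L n) ^ s.re := by
    intro n
    rw [norm_div, hc1 n]
    congr 1
    rw [Complex.norm_exp]
    have hre : (s * ((Real.log (qnumR q ((n : ℝ) + x)) : ℝ) : ℂ)).re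
        = s.re * Real.log (qnumR q ((n : ℝ) + x)) := by simp [Complex.mul_re]
    rw [hre, show (n : ℝ) + x = x + (n : ℝ) by ring]
    rw [Real.rpow_def_of_pos (hLpos n), mul_comm]
  have hnormdiv2 : ∀ n : ℕ, ‖qcpow q ((h - 1) * (n : ℂ)) /
      Complex.exp ((s - 1) * (Real.log (qnumR q ((n : ℝ) + x)) : ℂ))‖
        = r2 ^ n / (L n) ^ (s.re - 1) := by
    intro n
    rw [norm_div, hc2 n]
    congr 1
    rw [Complex.norm_exp]
    have hre : ((s - 1) * ((Real.log (qnumR q ((n : ℝ) + x)) : ℝ) : ℂ)).re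
        = (s.re - 1) * Real.log (qnumR q ((n : ℝ) + x)) := by
      simp [Complex.mul_re, Complex.sub_re]
    rw [hre, show (n : ℝ) + x = x + (n : ℝ) by ring]
    rw [Real.rpow_def_of_pos (hLpos n), mul_comm]
  have hrpow_ge1 : ∀ n : ℕ, L0 ^ s.re ≤ (L n) ^ s.re := fun n =>
    Real.rpow_le_rpow hL0pos.le (hLge n) (by linarith)
  have hrpow_ge2 : ∀ n : ℕ, L0 ^ (s.re - 1) ≤ (L n) ^ (s.re - 1) := fun n =>
    Real.rpow_le_rpow hL0pos.le (hLge n) (by linarith)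
  have hsum3 : Summable (fun n : ℕ => qcpow q (h * (n : ℂ) + (x : ℂ)) /
      Complex.exp (s * (Real.log (qnumR q ((n : ℝ) + x)) : ℂ))) := by
    apply Summable.of_norm
    refine Summable.of_nonneg_of_le (fun n => norm_nonneg _) (fun n => ?_)
      (hgeo1.mul_right (L0 ^ s.re)⁻¹)
    rw [hnormdiv1 n, div_eq_mul_inv]
    have hp0 : (0:ℝ) < L0 ^ s.re := Real.rpow_pos_of_pos hL0pos _
    have : ((L n) ^ s.re)⁻¹ ≤ (L0 ^ s.re)⁻¹ :=
      inv_anti₀ hp0 (hrpow_ge1 n)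
    exact mul_le_mul_of_nonneg_left this (by positivity)
  have hsum4 : Summable (fun n : ℕ => qcpow q ((h - 1) * (n : ℂ)) /
      Complex.exp ((s - 1) * (Real.log (qnumR q ((n : ℝ) + x)) : ℂ))) := by
    apply Summable.of_norm
    refine Summable.of_nonneg_of_le (fun n => norm_nonneg _) (fun n => ?_)
      (hgeo2.mul_right (L0 ^ (s.re - 1))⁻¹)
    rw [hnormdiv2 n, div_eq_mul_inv]
    have hp0 : (0:ℝ) < L0 ^ (s.re - 1) := Real.rpow_pos_of_pos hL0pos _
    have : ((L n) ^ (s.re - 1))⁻¹ ≤ (L0 ^ (s.re - 1))⁻¹ :=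
      inv_anti₀ hp0 (hrpow_ge2 n)
    exact mul_le_mul_of_nonneg_left this (by positivity)
  refine ⟨hpart1, hTint, hsum3, hsum4, ?_⟩
  -- per-term integral values
  have hval1 : ∀ n : ℕ, ∫ t in Ioi (0:ℝ), f1 n t
      = (qcpow q (h * (n : ℂ) + (x : ℂ)) /
          Complex.exp (s * (Real.log (qnumR q ((n : ℝ) + x)) : ℂ))) * Complex.Gamma s := by
    intro n
    rw [hf1def]
    simp only
    rw [integral_const_mul, hq_integral_aux s hs0 (L n) (hLpos n),
      hq_cpow_inv (L n) (hLpos n) s, show (n : ℝ) + x = x + (n : ℝ) by ring]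
    rw [div_eq_mul_inv]
    ring
  have hval2 : ∀ n : ℕ, ∫ t in Ioi (0:ℝ), f2 n t
      = (qcpow q ((h - 1) * (n : ℂ)) /
          Complex.exp ((s - 1) * (Real.log (qnumR q ((n : ℝ) + x)) : ℂ)))
            * Complex.Gamma (s - 1) := by
    intro n
    rw [hf2def]
    simp only
    rw [show s - 2 = (s - 1) - 1 by ring, integral_const_mul,
      hq_integral_aux (s - 1) hs1re (L n) (hLpos n),
      hq_cpow_inv (L n) (hLpos n) (s - 1), show (n : ℝ) + x = x + (n : ℝ) by ring]
    rw [div_eq_mul_inv]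
    ring
  -- compute the integral
  have hIeq : ∫ t in Ioi (0:ℝ), Complex.exp ((s - 2) * (Real.log t : ℂ)) * FqNeg q h x t
      = (∑' n : ℕ, qcpow q (h * (n : ℂ) + (x : ℂ)) /
          Complex.exp (s * (Real.log (qnumR q ((n : ℝ) + x)) : ℂ))) * Complex.Gamma s
        + (h - 1) * (1 - (q : ℂ)) *
          ((∑' n : ℕ, qcpow q ((h - 1) * (n : ℂ)) /
            Complex.exp ((s - 1) * (Real.log (qnumR q ((n : ℝ) + x)) : ℂ)))
              * Complex.Gamma (s - 1)) := by
    rw [setIntegral_congr_fun measurableSet_Ioi heq]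
    rw [integral_add hS1int (hS2int.const_mul _), integral_const_mul]
    rw [← hkey1, ← hkey2]
    congr 1
    · rw [← tsum_mul_right]
      exact tsum_congr hval1
    · congr 1
      rw [← tsum_mul_right]
      exact tsum_congr hval2
  rw [hIeq, hqZetaH]
  -- Gamma algebra
  have hs1ne : s - 1 ≠ 0 := by
    intro hzero
    have := congrArg Complex.re hzero
    rw [Complex.sub_re, Complex.one_re, Complex.zero_re] at this
    linarith
  have hGne : Complex.Gamma s ≠ 0 := by
    apply Complex.Gamma_ne_zero
    intro m hm
    have := congrArg Complex.re hm
    rw [Complex.neg_re, Complex.natCast_re] at this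
    have : (0:ℝ) ≤ (m:ℝ) := Nat.cast_nonneg m
    linarith [congrArg Complex.re hm, Complex.neg_re (m : ℂ)]
  have hGam : Complex.Gamma s = (s - 1) * Complex.Gamma (s - 1) := by
    have := Complex.Gamma_add_one (s - 1) hs1ne
    rw [sub_add_cancel] at this
    exact this
  have hG1 : Complex.Gamma (s - 1) = Complex.Gamma s / (s - 1) := by
    rw [eq_div_iff hs1ne, mul_comm]; exact hGam.symm
  rw [hG1]
  field_simp
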